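/- Let a < b be positive integers with b ≠ 2a, X = {a, b, a+b}, and G the associated Grundy sequence. Suppose n is the least pile with G(n) = k and that G(n+a) ≠ k (i.e., G(n+a) < k). Then G(n+b) = k. -/

import Mathlib

/-- The minimum excludant of a set of naturals. -/
noncomputable def mex (S : Set ℕ) : ℕ := sInf {m | m ∉ S}

/-- `G` is the Grundy (nim) sequence of the all-but subtraction game with
excluded set `X`: `G n = mex { G (n - t) : t > 0, t ∉ X, t ≤ n }`. -/
def IsGrundy (X : Set ℕ) (G : ℕ → ℕ) : Prop :=
  ∀ n, G n = mex {m | ∃ t, 0 < t ∧ t ∉ X ∧ t ≤ n ∧ G (n - t) = m}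

lemma mex_eq_of (S : Set ℕ) (k : ℕ) (h1 : ∀ j < k, j ∈ S) (h2 : k ∉ S) : mex S = k := by
  unfold mex
  refine le_antisymm (Nat.sInf_le h2) ?_
  by_contra h
  push_neg at h
  have hmem : sInf {m | m ∉ S} ∈ {m | m ∉ S} := Nat.sInf_mem ⟨k, h2⟩
  exact hmem (h1 _ h)

lemma mex_not_mem (S : Set ℕ) (hS : S.Finite) : mex S ∉ S :=
  Nat.sInf_mem hS.infinite_compl.nonempty

lemma mem_of_lt_mex {S : Set ℕ} {j : ℕ} (h : j < mex S) : j ∈ S := by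
  by_contra hj
  exact absurd (Nat.sInf_le (show j ∈ {m | m ∉ S} from hj)) (not_le.mpr h)

lemma optVals_finite (X : Set ℕ) (G : ℕ → ℕ) (n : ℕ) :
    {m | ∃ t, 0 < t ∧ t ∉ X ∧ t ≤ n ∧ G (n - t) = m}.Finite := by
  apply Set.Finite.subset ((Set.finite_Iio n).image G)
  rintro m ⟨t, ht0, _, htn, rfl⟩
  exact ⟨n - t, by simp only [Set.mem_Iio]; omega, rfl⟩

lemma gap (X : Set ℕ) (G : ℕ → ℕ) (hG : IsGrundy X G) {n k : ℕ}
    (hGn : G n = k) {m : ℕ} (hm : n < m) (hGm : G m = k) : m - n ∈ X := by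
  by_contra hX
  have hkV : k ∈ {p | ∃ t, 0 < t ∧ t ∉ X ∧ t ≤ m ∧ G (m - t) = p} :=
    ⟨m - n, by omega, hX, by omega, by rw [show m - (m - n) = n by omega]; exact hGn⟩
  have hnm := mex_not_mem _ (optVals_finite X G m)
  rw [← hG m, hGm] at hnm
  exact hnm hkV

lemma grundy_surj (a b : ℕ) (ha : 0 < a) (hab : a < b) (G : ℕ → ℕ)
    (hG : IsGrundy {a, b, a + b} G) : ∀ k, ∃ i, G i = k := by
  intro k
  induction k using Nat.strong_induction_on with
  | _ k ih =>
    by_contra hk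
    push_neg at hk
    set f : ℕ → ℕ := fun j => sInf {i | G i = j} with hf
    set n : ℕ := (Finset.range k).sup f + (a + b) + 1 with hn
    have hGn : G n = k := by
      rw [hG n]
      apply mex_eq_of
      · intro j hj
        have hne : {i | G i = j}.Nonempty := ih j hj
        have hGfj : G (f j) = j := Nat.sInf_mem hne
        have hle : f j ≤ (Finset.range k).sup f := Finset.le_sup (Finset.mem_range.mpr hj)
        refine ⟨n - f j, by omega, ?_, by omega, ?_⟩
        · simp only [Set.mem_insert_iff, Set.mem_singleton_iff]
          omega
        · rw [show n - (n - f j) = f j by omega]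
          exact hGfj
      · rintro ⟨t, _, _, _, hGt⟩
        exact hk _ hGt
    exact hk n hGn

theorem stmt_16 (a b : ℕ) (ha : 0 < a) (hab : a < b) (hb : b ≠ 2 * a)
    (G : ℕ → ℕ) (hG : IsGrundy {a, b, a + b} G) (k n : ℕ)
    (hn : n = sInf {i | G i = k}) (hk : G (n + a) ≠ k) :
    G (n + b) = k := by
  have hne : {i | G i = k}.Nonempty := grundy_surj a b ha hab G hG k
  have hGn : G n = k := by rw [hn]; exact Nat.sInf_mem hne
  have hmin : ∀ m, m < n → G m ≠ k := by
    intro m hm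
    rw [hn] at hm
    exact Nat.notMem_of_lt_sInf (s := {i | G i = k}) hm
  rw [hG (n + b)]
  apply mex_eq_of
  · -- every j < k is an option value of n + b
    intro j hj
    have hjVn : j ∈ {m | ∃ t, 0 < t ∧ t ∉ ({a, b, a + b} : Set ℕ) ∧ t ≤ n ∧ G (n - t) = m} := by
      apply mem_of_lt_mex
      rw [← hG n, hGn]
      exact hj
    obtain ⟨t, ht0, htX, htn, hGt⟩ := hjVn
    simp only [Set.mem_insert_iff, Set.mem_singleton_iff] at htX
    push_neg at htX
    refine ⟨t + b, by omega, ?_, by omega, ?_⟩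
    · simp only [Set.mem_insert_iff, Set.mem_singleton_iff]
      omega
    · rw [show n + b - (t + b) = n - t by omega]
      exact hGt
  · -- k is not an option value of n + b
    rintro ⟨t, ht0, htX, htle, hGt⟩
    set m := n + b - t with hm
    have hmlt : m < n + b := by omega
    have hmn : ¬ m < n := fun h => hmin m h hGt
    rcases eq_or_lt_of_le (not_lt.mp hmn) with heq | hlt
    · -- m = n would force t = b ∈ X
      apply htX
      simp only [Set.mem_insert_iff, Set.mem_singleton_iff]
      omega
    · -- n < m < n + b : gap lemma forces m - n = a, i.e. m = n + a
      have hgap := gap _ G hG hGn hlt hGt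
      simp only [Set.mem_insert_iff, Set.mem_singleton_iff] at hgap
      have hma : m = n + a := by omega
      rw [hma] at hGt
      exact hk hGt
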